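/- Let events A₁,…,A_n in a probability space be such that each A_i is mutually independent of all but at most Δ of the others, and P(A_i) ≤ 1/(e(Δ+1)) for all i, where e is the base of the natural logarithm. Then P(⋂ᵢ Ā_i) > 0. -/

import Mathlib

open MeasureTheory ENNReal

lemma lll_key_ineq (D : ℕ) :
    1 / (Real.exp 1 * (D + 1)) ≤ (1/((D:ℝ)+2)) * (1 - 1/((D:ℝ)+2))^D := by
  have hD1 : (0:ℝ) < (D:ℝ) + 1 := by positivity
  have hD2 : (0:ℝ) < (D:ℝ) + 2 := by positivity
  have hstep : (D:ℝ)+2 ≤ ((D:ℝ)+1) * Real.exp (1/((D:ℝ)+1)) := by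
    have h := Real.add_one_le_exp (1/((D:ℝ)+1))
    have h2 : ((D:ℝ)+1) * (1/((D:ℝ)+1) + 1) = (D:ℝ)+2 := by field_simp; ring
    nlinarith
  have core : ((D:ℝ)+2)^(D+1) ≤ Real.exp 1 * ((D:ℝ)+1)^(D+1) := by
    calc ((D:ℝ)+2)^(D+1) ≤ (((D:ℝ)+1) * Real.exp (1/((D:ℝ)+1)))^(D+1) :=
          pow_le_pow_left₀ hD2.le hstep _
      _ = ((D:ℝ)+1)^(D+1) * Real.exp (1/((D:ℝ)+1))^(D+1) := mul_pow _ _ _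
      _ = Real.exp 1 * ((D:ℝ)+1)^(D+1) := by
          rw [← Real.exp_nat_mul]
          have : ((D:ℝ)+1) * (1/((D:ℝ)+1)) = 1 := by field_simp
          push_cast
          rw [this, mul_comm]
  have h1 : (1 : ℝ) - 1/((D:ℝ)+2) = ((D:ℝ)+1)/((D:ℝ)+2) := by field_simp; ring
  have hR : (1/((D:ℝ)+2)) * (((D:ℝ)+1)/((D:ℝ)+2))^D = ((D:ℝ)+1)^D / ((D:ℝ)+2)^(D+1) := by
    rw [div_pow, pow_succ]
    field_simp
  rw [h1, hR, div_le_div_iff₀ (by positivity) (by positivity)]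
  have hps : ((D:ℝ)+1)^D * (Real.exp 1 * ((D:ℝ)+1)) = Real.exp 1 * ((D:ℝ)+1)^(D+1) := by
    rw [pow_succ]; ring
  rw [one_mul, hps]
  exact core

/-- Symmetric Lovász local lemma: if each event `A i` is mutually independent of all other
events except at most `Δ` of them (given by a dependency graph `G` of maximum degree `≤ Δ`),
and `P(A i) ≤ 1/(e(Δ+1))`, then with positive probability none of the events occurs. -/
theorem stmt_12 {Ω : Type*} [MeasurableSpace Ω] (μ : Measure Ω) [IsProbabilityMeasure μ]
    {n : ℕ} (A : Fin n → Set Ω) (hA : ∀ i, MeasurableSet (A i))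
    (Δ : ℕ) (G : SimpleGraph (Fin n)) [DecidableRel G.Adj]
    (hdeg : ∀ i, G.degree i ≤ Δ)
    (hindep : ∀ (i : Fin n) (S : Finset (Fin n)), (∀ j ∈ S, j ≠ i ∧ ¬G.Adj i j) →
      ∀ B : Fin n → Set Ω, (∀ j, B j = A j ∨ B j = (A j)ᶜ) →
        μ (A i ∩ ⋂ j ∈ S, B j) = μ (A i) * μ (⋂ j ∈ S, B j))
    (hp : ∀ i, μ (A i) ≤ ENNReal.ofReal (1 / (Real.exp 1 * (Δ + 1)))) :
    0 < μ (⋂ i, (A i)ᶜ) := by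
  classical
  set x : ℝ := 1 / ((Δ:ℝ) + 2) with hxdef
  have hx0 : 0 < x := by positivity
  have hx1 : x < 1 := by
    rw [hxdef, div_lt_one (by positivity)]
    have : (0:ℝ) ≤ (Δ:ℝ) := Nat.cast_nonneg Δ
    linarith
  set y : ℝ≥0∞ := ENNReal.ofReal x with hydef
  set z : ℝ≥0∞ := ENNReal.ofReal (1 - x) with hzdef
  have hz1 : z ≤ 1 := ENNReal.ofReal_le_one.mpr (by linarith)
  have hzy : z + y = 1 := by
    rw [hzdef, hydef, ← ENNReal.ofReal_add (by linarith) hx0.le]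
    norm_num
  -- Peeling step: if the claim holds at (a, T), then removing A a costs a factor z.
  have peel : ∀ (a : Fin n) (T : Finset (Fin n)),
      μ (A a ∩ ⋂ j ∈ T, (A j)ᶜ) ≤ y * μ (⋂ j ∈ T, (A j)ᶜ) →
      z * μ (⋂ j ∈ T, (A j)ᶜ) ≤ μ (⋂ j ∈ insert a T, (A j)ᶜ) := by
    intro a T h
    have hsplit : μ ((⋂ j ∈ T, (A j)ᶜ) ∩ A a) + μ ((⋂ j ∈ T, (A j)ᶜ) \ A a)
        = μ (⋂ j ∈ T, (A j)ᶜ) := measure_inter_add_diff _ (hA a)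
    have hins : (⋂ j ∈ insert a T, (A j)ᶜ) = (⋂ j ∈ T, (A j)ᶜ) \ A a := by
      rw [Finset.set_biInter_insert, Set.diff_eq, Set.inter_comm]
    rw [hins]
    have key : z * μ (⋂ j ∈ T, (A j)ᶜ) + μ ((⋂ j ∈ T, (A j)ᶜ) ∩ A a)
        ≤ μ ((⋂ j ∈ T, (A j)ᶜ) \ A a) + μ ((⋂ j ∈ T, (A j)ᶜ) ∩ A a) := by
      rw [add_comm (μ _) (μ _), hsplit]
      calc z * μ (⋂ j ∈ T, (A j)ᶜ) + μ ((⋂ j ∈ T, (A j)ᶜ) ∩ A a)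
          = z * μ (⋂ j ∈ T, (A j)ᶜ) + μ (A a ∩ ⋂ j ∈ T, (A j)ᶜ) := by
            rw [Set.inter_comm]
        _ ≤ z * μ (⋂ j ∈ T, (A j)ᶜ) + y * μ (⋂ j ∈ T, (A j)ᶜ) := add_le_add_right h _
        _ = (z + y) * μ (⋂ j ∈ T, (A j)ᶜ) := by rw [add_mul]
        _ = μ (⋂ j ∈ T, (A j)ᶜ) := by rw [hzy, one_mul]
    exact (ENNReal.add_le_add_iff_right (measure_ne_top μ _)).mp key
  -- Main claim, by strong induction on the cardinality of S.
  have claim : ∀ m : ℕ, ∀ S : Finset (Fin n), S.card < m → ∀ i, i ∉ S →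
      μ (A i ∩ ⋂ j ∈ S, (A j)ᶜ) ≤ y * μ (⋂ j ∈ S, (A j)ᶜ) := by
    intro m
    induction m with
    | zero => intro S hS; exact absurd hS (Nat.not_lt_zero _)
    | succ m ih =>
      intro S hS i hi
      have hScard : S.card ≤ m := Nat.lt_succ_iff.mp hS
      set S₁ : Finset (Fin n) := S.filter (fun j => G.Adj i j) with hS₁def
      set S₂ : Finset (Fin n) := S.filter (fun j => ¬ G.Adj i j) with hS₂def
      have hS₂S : S₂ ⊆ S := Finset.filter_subset _ _
      have hS₁S : S₁ ⊆ S := Finset.filter_subset _ _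
      have hunion : S₂ ∪ S₁ = S := by
        rw [hS₂def, hS₁def, Finset.union_comm, Finset.filter_union_filter_not_eq]
      -- Step A: independence over S₂
      have hcond : ∀ j ∈ S₂, j ≠ i ∧ ¬ G.Adj i j := by
        intro j hj
        refine ⟨fun hji => hi (hji ▸ hS₂S hj), (Finset.mem_filter.mp hj).2⟩
      have hindep2 : μ (A i ∩ ⋂ j ∈ S₂, (A j)ᶜ) = μ (A i) * μ (⋂ j ∈ S₂, (A j)ᶜ) :=
        hindep i S₂ hcond (fun j => (A j)ᶜ) (fun j => Or.inr rfl)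
      -- monotonicity
      have hmono : μ (A i ∩ ⋂ j ∈ S, (A j)ᶜ) ≤ μ (A i ∩ ⋂ j ∈ S₂, (A j)ᶜ) := by
        apply measure_mono
        apply Set.inter_subset_inter_right
        intro ω hω
        simp only [Set.mem_iInter] at hω ⊢
        exact fun j hj => hω j (hS₂S hj)
      -- Step B: peeling off the neighbours, one by one
      have hpeel : ∀ U : Finset (Fin n), U ⊆ S₁ →
          z ^ U.card * μ (⋂ j ∈ S₂, (A j)ᶜ) ≤ μ (⋂ j ∈ S₂ ∪ U, (A j)ᶜ) := by
        intro U
        induction U using Finset.induction_on with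
        | empty => intro _; simp
        | @insert a U ha ihU =>
          intro hsub
          have haS₁ : a ∈ S₁ := hsub (Finset.mem_insert_self a U)
          have hUsub : U ⊆ S₁ := (Finset.insert_subset_iff.mp hsub).2
          have haAdj : G.Adj i a := (Finset.mem_filter.mp haS₁).2
          have haS : a ∈ S := (Finset.mem_filter.mp haS₁).1
          have haT : a ∉ S₂ ∪ U := by
            intro h
            rcases Finset.mem_union.mp h with h | h
            · exact (Finset.mem_filter.mp h).2 haAdj
            · exact ha h
          have hcard : (S₂ ∪ U).card < m := by
            have hsubS : S₂ ∪ U ⊆ S.erase a := by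
              intro j hj
              have hjS : j ∈ S := by
                rcases Finset.mem_union.mp hj with h | h
                · exact hS₂S h
                · exact hS₁S (hUsub h)
              exact Finset.mem_erase.mpr ⟨fun hja => haT (hja ▸ hj), hjS⟩
            have h1 : (S₂ ∪ U).card ≤ (S.erase a).card := Finset.card_le_card hsubS
            have h2 : (S.erase a).card < S.card := Finset.card_erase_lt_of_mem haS
            omega
          have hih := ih (S₂ ∪ U) hcard a haT
          have hstep := peel a (S₂ ∪ U) hih
          have hset : S₂ ∪ insert a U = insert a (S₂ ∪ U) := Finset.union_insert _ _ _
          rw [hset]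
          calc z ^ (insert a U).card * μ (⋂ j ∈ S₂, (A j)ᶜ)
              = z * (z ^ U.card * μ (⋂ j ∈ S₂, (A j)ᶜ)) := by
                rw [Finset.card_insert_of_notMem ha, pow_succ]; ring
            _ ≤ z * μ (⋂ j ∈ S₂ ∪ U, (A j)ᶜ) := mul_le_mul_right (ihU hUsub) z
            _ ≤ μ (⋂ j ∈ insert a (S₂ ∪ U), (A j)ᶜ) := hstep
      -- cardinality bound for the neighbourhood
      have hd : S₁.card ≤ Δ := by
        have hsub : S₁ ⊆ G.neighborFinset i := by
          intro j hj
          rw [SimpleGraph.mem_neighborFinset]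
          exact (Finset.mem_filter.mp hj).2
        calc S₁.card ≤ (G.neighborFinset i).card := Finset.card_le_card hsub
          _ = G.degree i := rfl
          _ ≤ Δ := hdeg i
      -- probability bound
      have hpA : μ (A i) ≤ y * z ^ S₁.card := by
        calc μ (A i) ≤ ENNReal.ofReal (1 / (Real.exp 1 * (Δ + 1))) := hp i
          _ ≤ ENNReal.ofReal (x * (1-x)^Δ) := ENNReal.ofReal_le_ofReal (lll_key_ineq Δ)
          _ = y * z ^ Δ := by
              rw [ENNReal.ofReal_mul hx0.le, ENNReal.ofReal_pow (by linarith)]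
          _ ≤ y * z ^ S₁.card := by
              exact mul_le_mul_right (pow_le_pow_of_le_one (zero_le (a := z)) hz1 hd) y
      calc μ (A i ∩ ⋂ j ∈ S, (A j)ᶜ)
          ≤ μ (A i ∩ ⋂ j ∈ S₂, (A j)ᶜ) := hmono
        _ = μ (A i) * μ (⋂ j ∈ S₂, (A j)ᶜ) := hindep2
        _ ≤ (y * z ^ S₁.card) * μ (⋂ j ∈ S₂, (A j)ᶜ) := mul_le_mul_left hpA _
        _ = y * (z ^ S₁.card * μ (⋂ j ∈ S₂, (A j)ᶜ)) := by ring
        _ ≤ y * μ (⋂ j ∈ S₂ ∪ S₁, (A j)ᶜ) :=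
            mul_le_mul_right (hpeel S₁ (Finset.Subset.refl S₁)) y
        _ = y * μ (⋂ j ∈ S, (A j)ᶜ) := by rw [hunion]
  -- final lower bound
  have final : ∀ S : Finset (Fin n), z ^ S.card ≤ μ (⋂ j ∈ S, (A j)ᶜ) := by
    intro S
    induction S using Finset.induction_on with
    | empty => simp
    | @insert a S ha ihS =>
      have h1 := claim (S.card + 1) S (Nat.lt_succ_self _) a ha
      have h2 := peel a S h1
      calc z ^ (insert a S).card = z * z ^ S.card := by
            rw [Finset.card_insert_of_notMem ha, pow_succ]; ring
        _ ≤ z * μ (⋂ j ∈ S, (A j)ᶜ) := mul_le_mul_right ihS z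
        _ ≤ μ (⋂ j ∈ insert a S, (A j)ᶜ) := h2
  have hzpos : 0 < z := ENNReal.ofReal_pos.mpr (by linarith)
  have huniv : (⋂ i, (A i)ᶜ) = ⋂ j ∈ (Finset.univ : Finset (Fin n)), (A j)ᶜ := by
    simp
  rw [huniv]
  calc (0:ℝ≥0∞) < z ^ (Finset.univ : Finset (Fin n)).card := ENNReal.pow_pos hzpos _
    _ ≤ μ (⋂ j ∈ (Finset.univ : Finset (Fin n)), (A j)ᶜ) := final Finset.univ
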